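/- Fix points x₀ ∈ X and y₀ ∈ Y, and let D′ ⊆ C(Z,ℤ) be the subgroup of all elements f₁ − f₁∘φ̃⁻¹ + f₂ − f₂∘ψ̃⁻¹ with f₁, f₂ ∈ C(Z,ℤ) satisfying f₁(x₀,y,g) = 0 and f₂(x,y₀,g) = 0 for all x ∈ X, y ∈ Y, g ∈ G. Then the quotient group C(Z,ℤ)/D′ is torsion free. -/

import Mathlib

/-- X is a Cantor set: nonempty, compact, metrizable, totally disconnected, and
without isolated points. -/
def IsCantor (X : Type*) [TopologicalSpace X] : Prop :=
  Nonempty X ∧ CompactSpace X ∧ TopologicalSpace.MetrizableSpace X ∧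
    TotallyDisconnectedSpace X ∧ Perfect (Set.univ : Set X)

/-- A homeomorphism is minimal if every (two-sided) orbit is dense. -/
def IsMinimalHomeo {X : Type*} [TopologicalSpace X] (φ : X ≃ₜ X) : Prop :=
  ∀ x : X, Dense (Set.range fun k : ℤ => (φ.toEquiv ^ k) x)

variable {X Y G : Type*} [TopologicalSpace X] [TopologicalSpace Y]
  [TopologicalSpace G] [CommGroup G] [IsTopologicalGroup G]

/-- The skew product homeomorphism φ×ξ of X × G, (φ×ξ)(x,g) = (φ(x), gξ(x)).
A cocycle ξ is non-degenerate when this homeomorphism is minimal. -/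
def skewProd (φ : X ≃ₜ X) (ξ : C(X, G)) : (X × G) ≃ₜ (X × G) where
  toFun z := (φ z.1, z.2 * ξ z.1)
  invFun z := (φ.symm z.1, z.2 * (ξ (φ.symm z.1))⁻¹)
  left_inv z := by simp
  right_inv z := by simp
  continuous_toFun := by fun_prop
  continuous_invFun := by fun_prop

/-- The homeomorphism φ̃(x,y,g) = (φ(x), y, gξ(x)) of Z = X × Y × G. -/
def phiTilde (φ : X ≃ₜ X) (ξ : C(X, G)) : (X × Y × G) ≃ₜ (X × Y × G) where
  toFun z := (φ z.1, z.2.1, z.2.2 * ξ z.1)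
  invFun z := (φ.symm z.1, z.2.1, z.2.2 * (ξ (φ.symm z.1))⁻¹)
  left_inv z := by simp
  right_inv z := by simp
  continuous_toFun := by fun_prop
  continuous_invFun := by fun_prop

/-- The homeomorphism ψ̃(x,y,g) = (x, ψ(y), gη(y)) of Z = X × Y × G. -/
def psiTilde (ψ : Y ≃ₜ Y) (η : C(Y, G)) : (X × Y × G) ≃ₜ (X × Y × G) where
  toFun z := (z.1, ψ z.2.1, z.2.2 * η z.2.1)
  invFun z := (z.1, ψ.symm z.2.1, z.2.2 * (η (ψ.symm z.2.1))⁻¹)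
  left_inv z := by simp
  right_inv z := by simp
  continuous_toFun := by fun_prop
  continuous_invFun := by fun_prop

/-- The subgroup D′ of C(Z,ℤ): elements f₁ − f₁∘φ̃⁻¹ + f₂ − f₂∘ψ̃⁻¹ with
f₁(x₀,y,g) = 0 and f₂(x,y₀,g) = 0 for all x, y, g. -/
def Dprime (φ : X ≃ₜ X) (ψ : Y ≃ₜ Y) (ξ : C(X, G)) (η : C(Y, G)) (x₀ : X) (y₀ : Y) :
    AddSubgroup C(X × Y × G, ℤ) where
  carrier := {h | ∃ f₁ f₂ : C(X × Y × G, ℤ),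
    (∀ (y : Y) (g : G), f₁ (x₀, y, g) = 0) ∧
    (∀ (x : X) (g : G), f₂ (x, y₀, g) = 0) ∧
    h = f₁ - f₁.comp ((phiTilde (Y := Y) φ ξ).symm : C(X × Y × G, X × Y × G))
        + (f₂ - f₂.comp ((psiTilde (X := X) ψ η).symm : C(X × Y × G, X × Y × G)))}
  zero_mem' := ⟨0, 0, by simp, by simp, by simp⟩
  add_mem' := by
    rintro h h' ⟨f₁, f₂, h1, h2, rfl⟩ ⟨g₁, g₂, k1, k2, rfl⟩
    refine ⟨f₁ + g₁, f₂ + g₂, ?_, ?_, ?_⟩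
    · intro y g; simp [h1 y g, k1 y g]
    · intro x g; simp [h2 x g, k2 x g]
    · rw [ContinuousMap.add_comp, ContinuousMap.add_comp]; abel
  neg_mem' := by
    rintro h ⟨f₁, f₂, h1, h2, rfl⟩
    refine ⟨-f₁, -f₂, ?_, ?_, ?_⟩
    · intro y g; simp [h1 y g]
    · intro x g; simp [h2 x g]
    · rw [ContinuousMap.neg_comp, ContinuousMap.neg_comp]; abel

section AuxLemmas

lemma aux_min {W : Type*} [TopologicalSpace W] (T : W ≃ₜ W) (hT : IsMinimalHomeo T)
    (s : Set W) (hs : IsClosed s) (hinv : ∀ w, w ∈ s ↔ T w ∈ s)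
    (w₀ : W) (h0 : w₀ ∈ s) : ∀ w, w ∈ s := by
  have hpow : ∀ m : ℤ, (T.toEquiv ^ (1 + m)) w₀ = T ((T.toEquiv ^ m) w₀) := by
    intro m; rw [zpow_one_add, Equiv.Perm.mul_apply]; rfl
  have horb : ∀ n : ℤ, (T.toEquiv ^ n) w₀ ∈ s := by
    intro n
    induction n using Int.induction_on with
    | zero => simpa using h0
    | succ i ih =>
        have h1 := (hinv ((T.toEquiv ^ (i : ℤ)) w₀)).mp ih
        rw [← hpow] at h1
        have e : (1 : ℤ) + i = i + 1 := by ring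
        rwa [e] at h1
    | pred i ih =>
        apply (hinv ((T.toEquiv ^ (-(i : ℤ) - 1)) w₀)).mpr
        rw [← hpow]
        have e : (1 : ℤ) + (-(i : ℤ) - 1) = -(i : ℤ) := by ring
        rwa [e]
  have hsub : Set.range (fun n : ℤ => (T.toEquiv ^ n) w₀) ⊆ s := by
    rintro _ ⟨n, rfl⟩; exact horb n
  intro w
  have h1 : closure (Set.range fun n : ℤ => (T.toEquiv ^ n) w₀) ⊆ s :=
    closure_minimal hsub hs
  exact h1 ((hT w₀).closure_eq ▸ Set.mem_univ w)

lemma aux_dvd {Y G : Type*} [TopologicalSpace Y] [TopologicalSpace G] [CommGroup G]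
    [IsTopologicalGroup G] (ψ : Y ≃ₜ Y) (η : C(Y, G))
    (hη : IsMinimalHomeo (skewProd ψ η)) (y₀ : Y) (k : ℤ) (u : Y × G → ℤ)
    (hu : Continuous u) (hrel : ∀ v, k ∣ (u ((skewProd ψ η) v) - u v))
    (h0 : u (y₀, 1) = 0) : ∀ v, k ∣ u v := by
  have hcl : IsClosed {v : Y × G | k ∣ u v} := by
    have : {v : Y × G | k ∣ u v} = u ⁻¹' {n : ℤ | k ∣ n} := rfl
    rw [this]
    exact (isClosed_discrete _).preimage hu
  have hinv : ∀ v : Y × G, v ∈ {v : Y × G | k ∣ u v} ↔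
      (skewProd ψ η) v ∈ {v : Y × G | k ∣ u v} := by
    intro v
    simp only [Set.mem_setOf_eq]
    constructor
    · intro h
      have h2 := dvd_add (hrel v) h
      simpa using h2
    · intro h
      have h2 := dvd_sub h (hrel v)
      simpa using h2
  have hbase : (y₀, (1 : G)) ∈ {v : Y × G | k ∣ u v} := by
    show k ∣ u (y₀, 1)
    rw [h0]
    exact dvd_zero k
  exact aux_min _ hη _ hcl hinv (y₀, 1) hbase

lemma aux_lc {X V : Type*} [TopologicalSpace X] [TopologicalSpace V] [CompactSpace V]
    (f : C(X × V, ℤ)) : IsLocallyConstant (fun x : X => (fun v : V => f (x, v))) := by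
  intro s
  rw [isOpen_iff_forall_mem_open]
  intro x hx
  have hbox : ∀ v : V, ∃ (U : Set X) (Wv : Set V), IsOpen U ∧ IsOpen Wv ∧ x ∈ U ∧ v ∈ Wv ∧
      ∀ p : X × V, p ∈ U ×ˢ Wv → f p = f (x, v) := by
    intro v
    have hopen : IsOpen (f ⁻¹' {f (x, v)} : Set (X × V)) :=
      (isOpen_discrete _).preimage f.continuous
    rcases isOpen_prod_iff.mp hopen x v (by simp) with ⟨U, Wv, hU, hW, hxU, hvW, hsub⟩
    exact ⟨U, Wv, hU, hW, hxU, hvW, fun p hp => hsub hp⟩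
  choose U Wv hU hW hxU hvW hval using hbox
  obtain ⟨t, ht⟩ := IsCompact.elim_finite_subcover isCompact_univ Wv hW
    (fun v _ => Set.mem_iUnion.mpr ⟨v, hvW v⟩)
  refine ⟨⋂ v ∈ t, U v, ?_, isOpen_biInter_finset (fun v _ => hU v),
    Set.mem_iInter₂.mpr (fun v _ => hxU v)⟩
  intro x' hx'
  have hfe : (fun v : V => f (x', v)) = (fun v : V => f (x, v)) := by
    funext v'
    rcases Set.mem_iUnion₂.mp (ht (Set.mem_univ v')) with ⟨v, hv, hv'⟩
    have e1 := hval v (x', v') ⟨Set.mem_iInter₂.mp hx' v hv, hv'⟩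
    have e2 := hval v (x, v') ⟨hxU v, hv'⟩
    rw [e1, e2]
  show (fun v : V => f (x', v)) ∈ s
  rw [hfe]
  exact hx

lemma aux_cont {X V : Type*} [TopologicalSpace X] [TopologicalSpace V]
    (H : X → C(V, ℤ)) (hH : IsLocallyConstant H) :
    Continuous (fun z : X × V => H z.1 z.2) := by
  have hlc : IsLocallyConstant (fun z : X × V => H z.1 z.2) := by
    intro s
    rw [isOpen_iff_forall_mem_open]
    rintro ⟨x, v⟩ hz
    obtain ⟨U, hUo, hxU, hUc⟩ := hH.exists_open x
    refine ⟨U ×ˢ ((H x) ⁻¹' s), ?_, hUo.prod ((isOpen_discrete s).preimage (H x).continuous), ⟨hxU, hz⟩⟩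
    rintro ⟨x', v'⟩ ⟨hx', hv'⟩
    show H x' v' ∈ s
    rw [hUc x' hx']
    exact hv'
  exact hlc.continuous

lemma aux_transfer {Y G : Type*} [TopologicalSpace Y] [TopologicalSpace G] [CommGroup G]
    [IsTopologicalGroup G] (ψ : Y ≃ₜ Y) (η : C(Y, G))
    (hη : IsMinimalHomeo (skewProd ψ η)) (y₀ : Y) (k : ℕ) (hk : k ≠ 0)
    (w : C(Y × G, ℤ)) (hw0 : ∀ g : G, w (y₀, g) = 0)
    (u : Y × G → ℤ) (hu : ∀ v, (k : ℤ) * u v = w v - w ((skewProd ψ η).symm v)) :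
    ∃ w' : C(Y × G, ℤ), (∀ g : G, w' (y₀, g) = 0) ∧
      ∀ v, u v = w' v - w' ((skewProd ψ η).symm v) := by
  have hdvd : ∀ v, (k : ℤ) ∣ w v := by
    apply aux_dvd ψ η hη y₀ _ _ w.continuous ?_ (hw0 1)
    intro v
    have h1 := hu ((skewProd ψ η) v)
    rw [Homeomorph.symm_apply_apply] at h1
    exact ⟨u ((skewProd ψ η) v), h1.symm⟩
  have hkz : (k : ℤ) ≠ 0 := Int.natCast_ne_zero.mpr hk
  refine ⟨⟨fun v => w v / (k : ℤ), ?_⟩, ?_, ?_⟩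
  · exact (continuous_of_discreteTopology (f := fun n : ℤ => n / (k : ℤ))).comp w.continuous
  · intro g
    simp only [ContinuousMap.coe_mk]
    rw [hw0 g]
    simp
  · intro v
    apply mul_left_cancel₀ hkz
    simp only [ContinuousMap.coe_mk]
    rw [mul_sub, Int.mul_ediv_cancel' (hdvd v), Int.mul_ediv_cancel' (hdvd _)]
    exact hu v

end AuxLemmas

section Key

variable {X Y G : Type} [TopologicalSpace X] [TopologicalSpace Y] [TopologicalSpace G]
  [DiscreteTopology G] [CommGroup G] [IsTopologicalGroup G]

/-- The subgroup `E + k·C` of functions on `Y × G`, used as coefficient data. -/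
def EsetDef (ψ : Y ≃ₜ Y) (η : C(Y, G)) (y₀ : Y) (k : ℕ) : Set ((Y × G) → ℤ) :=
  {u | ∃ w c : C(Y × G, ℤ), (∀ g : G, w (y₀, g) = 0) ∧
    ∀ v, u v = w v - w ((skewProd ψ η).symm v) + (k : ℤ) * c v}

lemma EsetDef.zero_mem (ψ : Y ≃ₜ Y) (η : C(Y, G)) (y₀ : Y) (k : ℕ) :
    (fun _ : Y × G => (0 : ℤ)) ∈ EsetDef ψ η y₀ k :=
  ⟨0, 0, fun _ => rfl, fun v => by simp⟩

lemma EsetDef.add_mem {ψ : Y ≃ₜ Y} {η : C(Y, G)} {y₀ : Y} {k : ℕ}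
    {u u' : (Y × G) → ℤ} (hu : u ∈ EsetDef ψ η y₀ k) (hu' : u' ∈ EsetDef ψ η y₀ k) :
    (fun v => u v + u' v) ∈ EsetDef ψ η y₀ k := by
  obtain ⟨w, c, hw, hc⟩ := hu
  obtain ⟨w', c', hw', hc'⟩ := hu'
  refine ⟨w + w', c + c', fun g => ?_, fun v => ?_⟩
  · simp [hw g, hw' g]
  · simp only [ContinuousMap.add_apply]
    rw [hc v, hc' v]
    ring

lemma EsetDef.sub_mem {ψ : Y ≃ₜ Y} {η : C(Y, G)} {y₀ : Y} {k : ℕ}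
    {u u' : (Y × G) → ℤ} (hu : u ∈ EsetDef ψ η y₀ k) (hu' : u' ∈ EsetDef ψ η y₀ k) :
    (fun v => u v - u' v) ∈ EsetDef ψ η y₀ k := by
  obtain ⟨w, c, hw, hc⟩ := hu
  obtain ⟨w', c', hw', hc'⟩ := hu'
  refine ⟨w - w', c - c', fun g => ?_, fun v => ?_⟩
  · simp [hw g, hw' g]
  · simp only [ContinuousMap.sub_apply]
    rw [hc v, hc' v]
    ring

lemma EsetDef.add_iff {ψ : Y ≃ₜ Y} {η : C(Y, G)} {y₀ : Y} {k : ℕ}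
    {d u : (Y × G) → ℤ} (hd : d ∈ EsetDef ψ η y₀ k) :
    ((fun v => d v + u v) ∈ EsetDef ψ η y₀ k) ↔ u ∈ EsetDef ψ η y₀ k := by
  constructor
  · intro h
    have h2 := EsetDef.sub_mem h hd
    simpa using h2
  · intro h
    exact EsetDef.add_mem hd h

end Key

set_option maxHeartbeats 1000000 in
lemma keyLemma {X Y G : Type} [TopologicalSpace X] [TopologicalSpace Y] [TopologicalSpace G]
    [DiscreteTopology G] [CommGroup G] [IsTopologicalGroup G] [CompactSpace Y] [Finite G]
    (φ : X ≃ₜ X) (ψ : Y ≃ₜ Y) (ξ : C(X, G)) (η : C(Y, G))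
    (hξ : IsMinimalHomeo (skewProd φ ξ)) (hη : IsMinimalHomeo (skewProd ψ η))
    (x₀ : X) (y₀ : Y) (k : ℕ) (hk : k ≠ 0)
    (f f₁ f₂ : C(X × Y × G, ℤ))
    (h1 : ∀ y g, f₁ (x₀, y, g) = 0) (h2 : ∀ x g, f₂ (x, y₀, g) = 0)
    (heq : ∀ z, (k : ℤ) * f z =
      f₁ z - f₁ ((phiTilde φ ξ).symm z) + (f₂ z - f₂ ((psiTilde ψ η).symm z))) :
    ∃ g₁ g₂ : C(X × Y × G, ℤ), (∀ y g, g₁ (x₀, y, g) = 0) ∧ (∀ x g, g₂ (x, y₀, g) = 0) ∧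
      ∀ z, f z = g₁ z - g₁ ((phiTilde φ ξ).symm z) + (g₂ z - g₂ ((psiTilde ψ η).symm z)) := by
  -- point lemmas
  have hψs : ∀ z : X × Y × G, (psiTilde ψ η).symm z = (z.1, (skewProd ψ η).symm z.2) :=
    fun _ => rfl
  have hφs : ∀ (x : X) (y : Y) (g : G),
      (phiTilde φ ξ).symm (x, y, g) = (φ.symm x, y, g * (ξ (φ.symm x))⁻¹) :=
    fun _ _ _ => rfl
  have hSst : ∀ (v : Y × G) (h : G), (skewProd ψ η).symm (v.1, v.2 * h)
      = (((skewProd ψ η).symm v).1, ((skewProd ψ η).symm v).2 * h) := by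
    rintro ⟨y, g⟩ h
    show (ψ.symm y, g * h * (η (ψ.symm y))⁻¹) = (ψ.symm y, g * (η (ψ.symm y))⁻¹ * h)
    rw [mul_right_comm]
  have hφinv : ∀ (x : X) (y : Y) (g : G),
      (phiTilde φ ξ).symm (φ x, y, g * ξ x) = (x, y, g) := by
    intro x y g
    rw [hφs]
    rw [Homeomorph.symm_apply_apply]
    rw [mul_inv_cancel_right]
  have hcomm : ∀ z : X × Y × G,
      (phiTilde φ ξ).symm (z.1, (skewProd ψ η).symm z.2)
        = (((phiTilde φ ξ).symm z).1, (skewProd ψ η).symm (((phiTilde φ ξ).symm z).2)) := by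
    rintro ⟨x, y, g⟩
    show (φ.symm x, ψ.symm y, g * (η (ψ.symm y))⁻¹ * (ξ (φ.symm x))⁻¹)
      = (φ.symm x, ψ.symm y, g * (ξ (φ.symm x))⁻¹ * (η (ψ.symm y))⁻¹)
    rw [mul_right_comm]
  -- Phase A: every fiber of f₁ lies in EsetDef
  have hFlc : IsLocallyConstant (fun x : X => (fun v : Y × G => f₁ (x, v))) :=
    aux_lc (f₁ : C(X × (Y × G), ℤ))
  have hAset : ∀ p : X × G,
      (fun v : Y × G => f₁ (p.1, v.1, v.2 * p.2)) ∈ EsetDef ψ η y₀ k := by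
    have hA : ∀ p : X × G,
        p ∈ {p : X × G | (fun v : Y × G => f₁ (p.1, v.1, v.2 * p.2)) ∈ EsetDef ψ η y₀ k} ↔
        (skewProd φ ξ) p ∈
          {p : X × G | (fun v : Y × G => f₁ (p.1, v.1, v.2 * p.2)) ∈ EsetDef ψ η y₀ k} := by
      rintro ⟨x, h⟩
      simp only [Set.mem_setOf_eq]
      show (fun v : Y × G => f₁ (x, v.1, v.2 * h)) ∈ EsetDef ψ η y₀ k ↔
        (fun v : Y × G => f₁ (φ x, v.1, v.2 * (h * ξ x))) ∈ EsetDef ψ η y₀ k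
      have hd : (fun v : Y × G =>
          f₁ (φ x, v.1, v.2 * (h * ξ x)) - f₁ (x, v.1, v.2 * h)) ∈ EsetDef ψ η y₀ k := by
        refine ⟨⟨fun v => -f₂ (φ x, v.1, v.2 * (h * ξ x)), by fun_prop⟩,
          ⟨fun v => f (φ x, v.1, v.2 * (h * ξ x)), by fun_prop⟩, fun g => ?_, fun v => ?_⟩
        · simp [h2]
        · simp only [ContinuousMap.coe_mk]
          have H := heq (φ x, v.1, v.2 * h * ξ x)
          rw [show ((φ x, v.1, v.2 * h * ξ x) : X × Y × G) = (φ x, v.1, v.2 * h * ξ x) from rfl] at H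
          rw [hφinv x v.1 (v.2 * h)] at H
          rw [hψs (φ x, v.1, v.2 * h * ξ x)] at H
          have e1 : v.2 * h * ξ x = v.2 * (h * ξ x) := mul_assoc _ _ _
          rw [e1] at H
          rw [hSst v (h * ξ x)] at H
          -- H : k * f (φ x, v.1, v.2*(h*ξx)) = f₁ (φx, v.1, v.2*(h*ξx)) - f₁ (x, v.1, v.2*h)
          --      + (f₂ (φx, v.1, v.2*(h*ξx)) - f₂ (φx, (S⁻¹v).1, (S⁻¹v).2*(h*ξx)))
          linarith [H]
      have hfe : (fun v : Y × G => f₁ (φ x, v.1, v.2 * (h * ξ x)))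
          = (fun v : Y × G => (f₁ (φ x, v.1, v.2 * (h * ξ x)) - f₁ (x, v.1, v.2 * h))
              + f₁ (x, v.1, v.2 * h)) := by
        funext v; ring
      rw [hfe]
      exact (EsetDef.add_iff hd).symm
    have hclosed : IsClosed
        {p : X × G | (fun v : Y × G => f₁ (p.1, v.1, v.2 * p.2)) ∈ EsetDef ψ η y₀ k} := by
      rw [← isOpen_compl_iff]
      rw [isOpen_iff_forall_mem_open]
      intro p hp
      obtain ⟨U, hUo, hpU, hUc⟩ := hFlc.exists_open p.1
      refine ⟨U ×ˢ {p.2}, ?_, hUo.prod (isOpen_discrete _), ⟨hpU, rfl⟩⟩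
      rintro ⟨x', h'⟩ ⟨hxU, hh⟩
      rw [Set.mem_singleton_iff] at hh
      subst hh
      intro hmem
      apply hp
      have hfx : (fun v : Y × G => f₁ (x', v.1, v.2 * p.2))
          = (fun v : Y × G => f₁ (p.1, v.1, v.2 * p.2)) := by
        funext v
        exact congrFun (hUc x' hxU) (v.1, v.2 * p.2)
      show (fun v : Y × G => f₁ (p.1, v.1, v.2 * p.2)) ∈ EsetDef ψ η y₀ k
      rw [← hfx]
      exact hmem
    have hbase : ((x₀, (1 : G)) : X × G) ∈
        {p : X × G | (fun v : Y × G => f₁ (p.1, v.1, v.2 * p.2)) ∈ EsetDef ψ η y₀ k} := by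
      show (fun v : Y × G => f₁ (x₀, v.1, v.2 * 1)) ∈ EsetDef ψ η y₀ k
      refine ⟨0, 0, fun _ => rfl, fun v => ?_⟩
      simp [h1]
    exact aux_min _ hξ _ hclosed hA (x₀, 1) hbase
  have hE : ∀ x : X, (fun v : Y × G => f₁ (x, v)) ∈ EsetDef ψ η y₀ k := by
    intro x
    have h3 := hAset (x, 1)
    have hfe : (fun v : Y × G => f₁ (x, v.1, v.2 * 1)) = fun v : Y × G => f₁ (x, v) := by
      funext v
      rw [mul_one]
    rwa [hfe] at h3
  -- Phase B: choose decomposition data per fiber-value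
  have hpick : ∀ u : (Y × G) → ℤ, ∃ w c : C(Y × G, ℤ),
      u ∈ EsetDef ψ η y₀ k → ((∀ g : G, w (y₀, g) = 0) ∧
        ∀ v, u v = w v - w ((skewProd ψ η).symm v) + (k : ℤ) * c v) := by
    intro u
    by_cases hu : u ∈ EsetDef ψ η y₀ k
    · obtain ⟨w, c, hw, hc⟩ := hu
      exact ⟨w, c, fun _ => ⟨hw, hc⟩⟩
    · exact ⟨0, 0, fun hmem => absurd hmem hu⟩
  choose Wp Cp hWp using hpick
  have hWlc : IsLocallyConstant (fun x : X => Wp (fun v : Y × G => f₁ (x, v))) :=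
    hFlc.comp Wp
  have hClc : IsLocallyConstant (fun x : X => Cp (fun v : Y × G => f₁ (x, v))) :=
    hFlc.comp Cp
  have hgcont : Continuous (fun z : X × Y × G => Wp (fun v : Y × G => f₁ (z.1, v)) z.2) :=
    aux_cont (fun x : X => Wp (fun v : Y × G => f₁ (x, v))) hWlc
  have hccont : Continuous (fun z : X × Y × G => Cp (fun v : Y × G => f₁ (z.1, v)) z.2) :=
    aux_cont (fun x : X => Cp (fun v : Y × G => f₁ (x, v))) hClc
  set ghat : X × Y × G → ℤ := fun z => Wp (fun v : Y × G => f₁ (z.1, v)) z.2 with hghat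
  set chat : X × Y × G → ℤ := fun z => Cp (fun v : Y × G => f₁ (z.1, v)) z.2 with hchat
  have hWnorm : ∀ (x : X) (g : G), Wp (fun v : Y × G => f₁ (x, v)) (y₀, g) = 0 :=
    fun x g => (hWp _ (hE x)).1 g
  have hgnorm : ∀ (x : X) (g : G), ghat (x, y₀, g) = 0 := fun x g => hWnorm x g
  have hdecomp : ∀ z : X × Y × G,
      f₁ z = ghat z - ghat ((psiTilde ψ η).symm z) + (k : ℤ) * chat z := by
    intro z
    exact (hWp _ (hE z.1)).2 z.2
  -- Phase C
  set F2 : X × Y × G → ℤ := fun z => f₂ z + (ghat z - ghat ((phiTilde φ ξ).symm z)) with hF2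
  have hF2cont : Continuous F2 := by
    apply Continuous.add f₂.continuous
    exact hgcont.sub (hgcont.comp (phiTilde φ ξ).symm.continuous)
  have hF2norm : ∀ (x : X) (g : G), F2 (x, y₀, g) = 0 := by
    intro x g
    have e1 : (phiTilde φ ξ).symm (x, y₀, g) = (φ.symm x, y₀, g * (ξ (φ.symm x))⁻¹) :=
      hφs x y₀ g
    simp only [hF2, e1]
    rw [h2 x g, hgnorm x g, hgnorm (φ.symm x) (g * (ξ (φ.symm x))⁻¹)]
    ring
  have hidC : ∀ z : X × Y × G,
      (k : ℤ) * (f z - (chat z - chat ((phiTilde φ ξ).symm z)))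
        = F2 z - F2 ((psiTilde ψ η).symm z) := by
    intro z
    have H := heq z
    have D1 := hdecomp z
    have D2 := hdecomp ((phiTilde φ ξ).symm z)
    rw [hψs ((phiTilde φ ξ).symm z)] at D2
    rw [hψs z] at H D1 ⊢
    simp only [hF2]
    rw [hcomm z]
    linear_combination H + D1 - D2
  have hdvdF2 : ∀ z : X × Y × G, (k : ℤ) ∣ F2 z := by
    intro z
    have hfib := aux_dvd ψ η hη y₀ (k : ℤ) (fun v : Y × G => F2 (z.1, v))
      (hF2cont.comp (continuous_const.prodMk continuous_id)) ?_ ?_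
    · exact hfib z.2
    · intro v
      have H := hidC (z.1, (skewProd ψ η) v)
      rw [hψs (z.1, (skewProd ψ η) v)] at H
      simp only [Homeomorph.symm_apply_apply] at H
      exact ⟨_, H.symm⟩
    · show F2 (z.1, y₀, 1) = 0
      exact hF2norm z.1 1
  set g20 : X × Y × G → ℤ := fun z => F2 z / (k : ℤ) with hg20def
  have hkz : (k : ℤ) ≠ 0 := Int.natCast_ne_zero.mpr hk
  have hg20 : ∀ z, (k : ℤ) * g20 z = F2 z := fun z => Int.mul_ediv_cancel' (hdvdF2 z)
  have hg20cont : Continuous g20 :=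
    (continuous_of_discreteTopology (f := fun n : ℤ => n / (k : ℤ))).comp hF2cont
  have hg20norm : ∀ (x : X) (g : G), g20 (x, y₀, g) = 0 := by
    intro x g
    simp only [hg20def]
    rw [hF2norm x g]
    simp
  have hmain : ∀ z : X × Y × G, f z = (chat z - chat ((phiTilde φ ξ).symm z))
      + (g20 z - g20 ((psiTilde ψ η).symm z)) := by
    intro z
    apply mul_left_cancel₀ hkz
    have H := hidC z
    have E1 := hg20 z
    have E2 := hg20 ((psiTilde ψ η).symm z)
    linear_combination H - E1 + E2
  -- Phase D: normalize chat at the x₀-plane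
  have hx0 : ∀ v : Y × G, (k : ℤ) * Cp (fun v : Y × G => f₁ (x₀, v)) v
      = (-(Wp (fun v : Y × G => f₁ (x₀, v)))) v
        - (-(Wp (fun v : Y × G => f₁ (x₀, v)))) ((skewProd ψ η).symm v) := by
    intro v
    have hD := hdecomp (x₀, v)
    rw [hψs (x₀, v)] at hD
    have h0 : f₁ (x₀, v) = 0 := h1 v.1 v.2
    rw [h0] at hD
    simp only [ContinuousMap.neg_apply]
    -- hD : 0 = ghat (x₀, v) - ghat (x₀, S.symm v) + k * chat (x₀, v)
    have e1 : ghat (x₀, v) = Wp (fun v : Y × G => f₁ (x₀, v)) v := rfl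
    have e2 : ghat (x₀, (skewProd ψ η).symm v)
        = Wp (fun v : Y × G => f₁ (x₀, v)) ((skewProd ψ η).symm v) := rfl
    have e3 : chat (x₀, v) = Cp (fun v : Y × G => f₁ (x₀, v)) v := rfl
    rw [e1, e2, e3] at hD
    linarith [hD]
  obtain ⟨w₀, hw₀n, hw₀e⟩ := aux_transfer ψ η hη y₀ k hk
    (-(Wp (fun v : Y × G => f₁ (x₀, v))))
    (by intro g; simp [hWnorm x₀ g])
    (fun v => Cp (fun v : Y × G => f₁ (x₀, v)) v) hx0
  -- final witnesses
  refine ⟨⟨fun z => chat z - (w₀ z.2 - w₀ ((skewProd ψ η).symm z.2)), ?_⟩,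
    ⟨fun z => g20 z + (w₀ z.2 - w₀ (((phiTilde φ ξ).symm z).2)), ?_⟩, ?_, ?_, ?_⟩
  · apply Continuous.sub hccont
    apply Continuous.sub (w₀.continuous.comp continuous_snd)
    exact w₀.continuous.comp ((skewProd ψ η).symm.continuous.comp continuous_snd)
  · apply Continuous.add hg20cont
    apply Continuous.sub (w₀.continuous.comp continuous_snd)
    exact w₀.continuous.comp (continuous_snd.comp (phiTilde φ ξ).symm.continuous)
  · intro y g
    simp only [ContinuousMap.coe_mk]
    have e3 : chat (x₀, y, g) = Cp (fun v : Y × G => f₁ (x₀, v)) (y, g) := rfl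
    rw [e3, hw₀e (y, g)]
    ring
  · intro x g
    simp only [ContinuousMap.coe_mk]
    rw [hg20norm x g]
    have e1 : (((phiTilde φ ξ).symm (x, y₀, g)).2 : Y × G)
        = (y₀, g * (ξ (φ.symm x))⁻¹) := rfl
    rw [e1, hw₀n (g * (ξ (φ.symm x))⁻¹)]
    show (0 : ℤ) + (w₀ (y₀, g) - 0) = 0
    rw [hw₀n g]
    ring
  · intro z
    simp only [ContinuousMap.coe_mk]
    have hm := hmain z
    rw [hψs z] at hm ⊢
    have e1 : (((psiTilde ψ η).symm ((phiTilde φ ξ).symm z)) : X × Y × G)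
        = (((phiTilde φ ξ).symm z).1, (skewProd ψ η).symm (((phiTilde φ ξ).symm z).2)) :=
      hψs _
    have e2 := hcomm z
    -- expand and finish
    simp only [Prod.fst, Prod.snd]
    rw [e2]
    linarith [hm]

/-- Lemma 3.3 (AFpart): for Cantor minimal systems (X,φ), (Y,ψ) and non-degenerate
G-valued cocycles ξ, η, the quotient C(Z,ℤ)/D′ is torsion free. -/
theorem statement14
    (X Y G : Type) [TopologicalSpace X] [TopologicalSpace Y]
    [TopologicalSpace G] [DiscreteTopology G] [CommGroup G] [IsTopologicalGroup G] [Fintype G]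
    (hX : IsCantor X) (hY : IsCantor Y)
    (φ : X ≃ₜ X) (ψ : Y ≃ₜ Y)
    (hφ : IsMinimalHomeo φ) (hψ : IsMinimalHomeo ψ)
    (ξ : C(X, G)) (η : C(Y, G))
    (hξ : IsMinimalHomeo (skewProd φ ξ))
    (hη : IsMinimalHomeo (skewProd ψ η))
    (x₀ : X) (y₀ : Y) :
    ∀ (h : C(X × Y × G, ℤ) ⧸ Dprime φ ψ ξ η x₀ y₀) (k : ℕ), k ≠ 0 → k • h = 0 → h = 0 := by
  haveI : CompactSpace Y := hY.2.1
  intro h k hk hkh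
  obtain ⟨f, rfl⟩ := QuotientAddGroup.mk'_surjective (Dprime φ ψ ξ η x₀ y₀) h
  rw [← map_nsmul] at hkh
  have hmem : k • f ∈ Dprime φ ψ ξ η x₀ y₀ := by
    rw [← QuotientAddGroup.ker_mk' (Dprime φ ψ ξ η x₀ y₀)]
    exact hkh
  obtain ⟨F₁, F₂, hF₁, hF₂, hEq⟩ := hmem
  have heqpt : ∀ z, (k : ℤ) * f z
      = F₁ z - F₁ ((phiTilde φ ξ).symm z) + (F₂ z - F₂ ((psiTilde ψ η).symm z)) := by
    intro z
    have hz : (k • f) z = F₁ z - F₁ ((phiTilde φ ξ).symm z)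
        + (F₂ z - F₂ ((psiTilde ψ η).symm z)) := ContinuousMap.congr_fun hEq z
    have hsm : (k • f) z = (k : ℤ) * f z := by
      simp [nsmul_eq_mul]
    rw [← hsm]
    exact hz
  obtain ⟨g₁, g₂, hg₁, hg₂, hfin⟩ :=
    keyLemma φ ψ ξ η hξ hη x₀ y₀ k hk f F₁ F₂ hF₁ hF₂ heqpt
  have hfmem : f ∈ Dprime φ ψ ξ η x₀ y₀ := by
    refine ⟨g₁, g₂, hg₁, hg₂, ?_⟩
    ext z
    simp only [ContinuousMap.add_apply, ContinuousMap.sub_apply, ContinuousMap.comp_apply]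
    exact hfin z
  exact (QuotientAddGroup.eq_zero_iff f).mpr hfmem
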